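/- The polynomial V(x,y) = 1 + 4(1-a₁)x + 2(2a₁-1)y + 4(a₁-1)²x² - 4(a₁-1)(2a₁-1)xy - 4(a₁-1)²y² is an inverse integrating factor of the planar system ẋ = -y, ẏ = x + 2(1-a₁)x² + 2(2a₁-1)xy + 2(a₁-1)y², and V(0,0) = 1 ≠ 0. -/

import Mathlib

noncomputable def P9 (a₁ x y : ℝ) : ℝ := -y
noncomputable def Q9 (a₁ x y : ℝ) : ℝ :=
  x + 2*(1 - a₁)*x^2 + 2*(2*a₁ - 1)*x*y + 2*(a₁ - 1)*y^2
noncomputable def V9 (a₁ x y : ℝ) : ℝ :=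
  1 + 4*(1 - a₁)*x + 2*(2*a₁ - 1)*y + 4*(a₁ - 1)^2*x^2
  - 4*(a₁ - 1)*(2*a₁ - 1)*x*y - 4*(a₁ - 1)^2*y^2

/-- V is an inverse integrating factor and V(0,0) = 1 ≠ 0. -/
theorem stmt_9 (a₁ : ℝ) :
    (∀ x y : ℝ,
      P9 a₁ x y * deriv (fun s => V9 a₁ s y) x
      + Q9 a₁ x y * deriv (fun s => V9 a₁ x s) y
      = (deriv (fun s => P9 a₁ s y) x + deriv (fun s => Q9 a₁ x s) y)
          * V9 a₁ x y)
    ∧ V9 a₁ 0 0 = 1 ∧ (1 : ℝ) ≠ 0 := by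
  refine ⟨fun x y => ?_, by simp [V9], one_ne_zero⟩
  have h1 : deriv (fun s => V9 a₁ s y) x
      = 4*(1 - a₁) + 4*(a₁ - 1)^2*(2*x) - 4*(a₁ - 1)*(2*a₁ - 1)*y := by
    simp only [V9]
    norm_num [deriv_add, deriv_sub, deriv_mul, mul_comm]
    simp (disch := fun_prop) only [deriv_fun_add, deriv_fun_sub, deriv_fun_mul, deriv_const, deriv_id'', deriv_fun_pow]
    ring
  have h2 : deriv (fun s => V9 a₁ x s) y
      = 2*(2*a₁ - 1) - 4*(a₁ - 1)*(2*a₁ - 1)*x - 4*(a₁ - 1)^2*(2*y) := by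
    simp only [V9]
    norm_num [deriv_add, deriv_sub, deriv_mul, mul_comm]
    simp (disch := fun_prop) only [deriv_fun_add, deriv_fun_sub, deriv_fun_mul, deriv_const, deriv_id'', deriv_fun_pow]
    ring
  have h3 : deriv (fun s => P9 a₁ s y) x = 0 := by
    simp [P9]
  have h4 : deriv (fun s => Q9 a₁ x s) y
      = 2*(2*a₁ - 1)*x + 2*(a₁ - 1)*(2*y) := by
    simp only [Q9]
    norm_num [deriv_add, deriv_mul, mul_comm]
    simp (disch := fun_prop) only [deriv_fun_add, deriv_fun_sub, deriv_fun_mul, deriv_const, deriv_id'', deriv_fun_pow]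
    ring
  rw [h1, h2, h3, h4]
  simp only [P9, Q9, V9]
  ring
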